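/- Let w₁ > 0 and C > 0. If y : [a, b] → ℝ is differentiable on the compact interval [a, b] and satisfies y'(t) = w₁ + C·y(t)² for all t ∈ [a, b], then b − a < π/√(w₁·C). In other words, the maximal interval of existence of any solution of y' = w₁ + C·y² has length at most π/√(w₁·C). -/

import Mathlib

/-- Let `w₁ > 0` and `C > 0`.  If `y : [a, b] → ℝ` is differentiable on the
compact interval `[a, b]` and satisfies `y'(t) = w₁ + C·y(t)²` for all `t ∈ [a, b]`, then
`b − a < π/√(w₁·C)`: the maximal interval of existence of any solution of `y' = w₁ + C·y²`
has length less than `π/√(w₁·C)`. -/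
theorem riccati_maximal_interval_length
    (w₁ C a b : ℝ) (hw : 0 < w₁) (hC : 0 < C) (hab : a ≤ b)
    (y : ℝ → ℝ)
    (hy : ∀ t ∈ Set.Icc a b, HasDerivWithinAt y (w₁ + C * y t ^ 2) (Set.Icc a b) t) :
    b - a < Real.pi / Real.sqrt (w₁ * C) := by
  set k : ℝ := Real.sqrt (C / w₁) with hkdef
  set s : ℝ := Real.sqrt (w₁ * C) with hsdef
  have hs : 0 < s := Real.sqrt_pos.mpr (by positivity)
  have hk2 : k ^ 2 = C / w₁ := Real.sq_sqrt (by positivity)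
  have hkw : k * w₁ = s := by
    rw [hkdef, hsdef]
    rw [show w₁ * C = (C / w₁) * w₁ ^ 2 by field_simp,
      Real.sqrt_mul (by positivity), Real.sqrt_sq hw.le]
  -- the auxiliary function g(t) = arctan (k * y t) - s * t has zero derivative
  have hg : ∀ t ∈ Set.Icc a b,
      HasDerivWithinAt (fun t => Real.arctan (k * y t) - s * t) 0 (Set.Icc a b) t := by
    intro t ht
    have h1 : HasDerivWithinAt (fun t => k * y t) (k * (w₁ + C * y t ^ 2)) (Set.Icc a b) t :=
      (hy t ht).const_mul k
    have h2 := h1.arctan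
    have h3 : HasDerivWithinAt (fun t => s * t) s (Set.Icc a b) t := by
      simpa using (hasDerivWithinAt_id t (Set.Icc a b)).const_mul s
    have hpos : 0 < w₁ + C * y t ^ 2 := by positivity
    have heq : k * (w₁ + C * y t ^ 2) / (1 + (k * y t) ^ 2) = s := by
      rw [mul_pow, hk2]
      rw [show (1 : ℝ) + C / w₁ * y t ^ 2 = (w₁ + C * y t ^ 2) / w₁ by field_simp]
      rw [div_div_eq_mul_div, div_eq_iff (by positivity), ← hkw]
      ring
    have := h2.sub h3
    rw [one_div, inv_mul_eq_div, heq, sub_self] at this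
    exact this
  have key : ‖(Real.arctan (k * y b) - s * b) - (Real.arctan (k * y a) - s * a)‖ ≤ 0 * ‖b - a‖ :=
    Convex.norm_image_sub_le_of_norm_hasDerivWithin_le
      (f' := fun _ => (0 : ℝ)) hg (fun x _ => by simp) (convex_Icc a b)
      (Set.left_mem_Icc.mpr hab) (Set.right_mem_Icc.mpr hab)
  rw [zero_mul, norm_le_zero_iff, sub_eq_zero] at key
  have hsb : s * (b - a) = Real.arctan (k * y b) - Real.arctan (k * y a) := by linarith
  have h1 : Real.arctan (k * y b) < Real.pi / 2 := Real.arctan_lt_pi_div_two _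
  have h2 : -(Real.pi / 2) < Real.arctan (k * y a) := Real.neg_pi_div_two_lt_arctan _
  have : s * (b - a) < Real.pi := by rw [hsb]; linarith
  rw [lt_div_iff₀ hs]
  linarith [this]
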